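/- Let f_1, f_2, … : ℝ^d → ℝ be convex functions and let (u_t)_{t≥1} in ℝ^d satisfy u_{t+1} = u_t − (1/t)∇_t for all t ≥ 1, where each ∇_t is a subgradient of f_t at u_t and ‖∇_t‖ ≤ G2 for all t. Suppose the sequence (u_t) converges in ℝ^d. Then for every θ ∈ ℝ^d and every ε > 0, there exists T0 such that for all T ≥ T0, (1/T)·Σ_{t=1}^T f_t(u_t) ≤ (1/T)·Σ_{t=1}^T f_t(θ) + ε. -/

import Mathlib

open RealInnerProductSpace Finset Filter

/-- If the SGD iterates (step size `1/t`, bounded subgradients) converge, then for every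
comparison point `θ` and every `ε > 0`, the average of instantaneous objectives at the
iterates eventually exceeds the average at `θ` by at most `ε`. -/
theorem sgd_average_regret_eventually_small
    (d : ℕ) (f : ℕ → EuclideanSpace ℝ (Fin d) → ℝ)
    (u g : ℕ → EuclideanSpace ℝ (Fin d)) (G2 : ℝ)
    (hconv : ∀ t, 1 ≤ t →
      ConvexOn ℝ (Set.univ : Set (EuclideanSpace ℝ (Fin d))) (f t))
    (hsub : ∀ t, 1 ≤ t →
      ∀ x : EuclideanSpace ℝ (Fin d), f t x ≥ f t (u t) + ⟪g t, x - u t⟫)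
    (hstep : ∀ t, 1 ≤ t → u (t + 1) = u t - (1 / (t : ℝ)) • g t)
    (hg : ∀ t, 1 ≤ t → ‖g t‖ ≤ G2)
    (hlim : ∃ L : EuclideanSpace ℝ (Fin d), Tendsto u atTop (nhds L))
    (θ : EuclideanSpace ℝ (Fin d)) (ε : ℝ) (hε : 0 < ε) :
    ∃ T0 : ℕ, ∀ T, T0 ≤ T →
      (1 / (T : ℝ)) * ∑ t ∈ Finset.Icc 1 T, f t (u t)
        ≤ (1 / (T : ℝ)) * ∑ t ∈ Finset.Icc 1 T, f t θ + ε := by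
  classical
  obtain ⟨L, hL⟩ := hlim
  set a : ℕ → ℝ := fun t => ‖u t - θ‖ ^ 2 with ha
  have hG2 : 0 ≤ G2 := le_trans (norm_nonneg _) (hg 1 le_rfl)
  -- per-step bound
  have key : ∀ t, 1 ≤ t →
      f t (u t) - f t θ ≤ ((t : ℝ) / 2) * (a t - a (t + 1)) + G2 ^ 2 / (2 * t) := by
    intro t ht
    have htpos : (0 : ℝ) < t := by exact_mod_cast ht
    have hne : (t : ℝ) ≠ 0 := ne_of_gt htpos
    have h1 : f t (u t) - f t θ ≤ ⟪g t, u t - θ⟫ := by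
      have h := hsub t ht θ
      have h2 : ⟪g t, θ - u t⟫ = -⟪g t, u t - θ⟫ := by
        rw [← neg_sub (u t) θ, inner_neg_right]
      linarith
    have hdiff : u (t + 1) - θ = (u t - θ) - (1 / (t : ℝ)) • g t := by
      rw [hstep t ht]; abel
    have eq1 : a (t + 1) = a t - 2 * ((1 / (t : ℝ)) * ⟪g t, u t - θ⟫)
        + (1 / (t : ℝ)) ^ 2 * ‖g t‖ ^ 2 := by
      have e0 : a (t + 1) = ‖(u t - θ) - (1 / (t : ℝ)) • g t‖ ^ 2 := by
        simp only [ha]; rw [hdiff]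
      rw [e0, norm_sub_sq_real, real_inner_smul_right, norm_smul, mul_pow,
        Real.norm_eq_abs, sq_abs, real_inner_comm (u t - θ)]
    have hI : ⟪g t, u t - θ⟫ = ((t : ℝ) / 2) * (a t - a (t + 1)) + ‖g t‖ ^ 2 / (2 * t) := by
      rw [eq1]; field_simp; ring
    have hgg : ‖g t‖ ^ 2 ≤ G2 ^ 2 := by
      have := hg t ht
      nlinarith [norm_nonneg (g t)]
    have : ‖g t‖ ^ 2 / (2 * t) ≤ G2 ^ 2 / (2 * t) := by gcongr
    linarith
  -- Abel summation
  have abel : ∀ T : ℕ, ∑ t ∈ Icc 1 T, ((t : ℝ)) * (a t - a (t + 1))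
      = ∑ t ∈ Icc 1 T, a t - (T : ℝ) * a (T + 1) := by
    intro T
    induction T with
    | zero => simp
    | succ T ih =>
      rw [Finset.sum_Icc_succ_top (by omega), Finset.sum_Icc_succ_top (by omega), ih]
      push_cast
      ring
  -- limits
  set A : ℝ := ‖L - θ‖ ^ 2 with hA
  have haA : Tendsto a atTop (nhds A) := by
    exact ((hL.sub_const θ).norm).pow 2
  have haA' : Tendsto (fun i : ℕ => a (i + 1)) atTop (nhds A) :=
    haA.comp (tendsto_add_atTop_nat 1)
  have hsum_eq : ∀ (h : ℕ → ℝ) (T : ℕ), ∑ t ∈ Icc 1 T, h t = ∑ i ∈ range T, h (i + 1) := by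
    intro h T
    rw [← Finset.Ico_add_one_right_eq_Icc, Finset.sum_Ico_eq_sum_range, Nat.add_sub_cancel]
    exact Finset.sum_congr rfl fun i _ => by rw [add_comm]
  have hc1 : Tendsto (fun T : ℕ => (1 / (T : ℝ)) * ∑ t ∈ Icc 1 T, a t) atTop (nhds A) := by
    have h := haA'.cesaro
    simpa only [one_div, hsum_eq a] using h
  have hshift : Tendsto (fun T : ℕ => a (T + 1)) atTop (nhds A) := haA'
  have hc2 : Tendsto (fun T : ℕ => (1 / (T : ℝ)) * ∑ t ∈ Icc 1 T, (1 / (t : ℝ))) atTop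
      (nhds 0) := by
    have hv : Tendsto (fun i : ℕ => 1 / (((i + 1 : ℕ)) : ℝ)) atTop (nhds 0) :=
      tendsto_one_div_atTop_nhds_zero_nat.comp (tendsto_add_atTop_nat 1)
    have h := hv.cesaro
    refine Tendsto.congr (fun T => ?_) h
    rw [hsum_eq (fun t : ℕ => 1 / (t : ℝ)) T]
    simp [one_div]
  set E : ℕ → ℝ := fun T => (1 / 2) * ((1 / (T : ℝ)) * ∑ t ∈ Icc 1 T, a t - a (T + 1))
      + (G2 ^ 2 / 2) * ((1 / (T : ℝ)) * ∑ t ∈ Icc 1 T, (1 / (t : ℝ))) with hE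
  have hElim : Tendsto E atTop (nhds 0) := by
    have : Tendsto E atTop (nhds ((1 / 2) * (A - A) + (G2 ^ 2 / 2) * 0)) :=
      (((hc1.sub hshift).const_mul (1 / 2))).add (hc2.const_mul (G2 ^ 2 / 2))
    simpa using this
  have hev : ∀ᶠ T in atTop, E T < ε := hElim.eventually (tendsto_id.eventually_lt_const hε) |>.mono (fun T h => h)
  obtain ⟨T1, hT1⟩ := eventually_atTop.mp hev
  refine ⟨max T1 1, fun T hT => ?_⟩
  have hT1' : T1 ≤ T := le_trans (le_max_left _ _) hT
  have hTone : 1 ≤ T := le_trans (le_max_right _ _) hT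
  have hTpos : (0 : ℝ) < T := by exact_mod_cast hTone
  have hTne : (T : ℝ) ≠ 0 := ne_of_gt hTpos
  -- sum inequality
  have hsum : ∑ t ∈ Icc 1 T, (f t (u t) - f t θ)
      ≤ (1 / 2) * (∑ t ∈ Icc 1 T, a t - (T : ℝ) * a (T + 1))
        + (G2 ^ 2 / 2) * ∑ t ∈ Icc 1 T, (1 / (t : ℝ)) := by
    calc ∑ t ∈ Icc 1 T, (f t (u t) - f t θ)
        ≤ ∑ t ∈ Icc 1 T, (((t : ℝ) / 2) * (a t - a (t + 1)) + G2 ^ 2 / (2 * t)) := by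
          apply Finset.sum_le_sum
          intro t htmem
          exact key t (Finset.mem_Icc.mp htmem).1
      _ = (1 / 2) * ∑ t ∈ Icc 1 T, ((t : ℝ)) * (a t - a (t + 1))
          + (G2 ^ 2 / 2) * ∑ t ∈ Icc 1 T, (1 / (t : ℝ)) := by
          rw [Finset.sum_add_distrib, Finset.mul_sum, Finset.mul_sum]
          congr 1 <;> apply Finset.sum_congr rfl <;> intro t _ <;> ring
      _ = _ := by rw [abel]
  have hfinal : (1 / (T : ℝ)) * ∑ t ∈ Icc 1 T, f t (u t)
      - (1 / (T : ℝ)) * ∑ t ∈ Icc 1 T, f t θ ≤ E T := by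
    have h1 : (1 / (T : ℝ)) * ∑ t ∈ Icc 1 T, f t (u t)
        - (1 / (T : ℝ)) * ∑ t ∈ Icc 1 T, f t θ
        = (1 / (T : ℝ)) * ∑ t ∈ Icc 1 T, (f t (u t) - f t θ) := by
      rw [Finset.sum_sub_distrib]; ring
    rw [h1]
    have h2 : (1 / (T : ℝ)) * ((1 / 2) * (∑ t ∈ Icc 1 T, a t - (T : ℝ) * a (T + 1))
        + (G2 ^ 2 / 2) * ∑ t ∈ Icc 1 T, (1 / (t : ℝ))) = E T := by
      have hx : (1 / (T : ℝ)) * (T : ℝ) = 1 := by field_simp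
      simp only [hE]
      linear_combination (-(1 / 2) * a (T + 1)) * hx
    calc (1 / (T : ℝ)) * ∑ t ∈ Icc 1 T, (f t (u t) - f t θ)
        ≤ (1 / (T : ℝ)) * ((1 / 2) * (∑ t ∈ Icc 1 T, a t - (T : ℝ) * a (T + 1))
          + (G2 ^ 2 / 2) * ∑ t ∈ Icc 1 T, (1 / (t : ℝ))) := by
          apply mul_le_mul_of_nonneg_left hsum (by positivity)
      _ = E T := h2
  have hlt := hT1 T hT1'
  have h3 : (1 / (T : ℝ)) * ∑ t ∈ Icc 1 T, f t (u t)
      ≤ (1 / (T : ℝ)) * ∑ t ∈ Icc 1 T, f t θ + E T := by linarith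
  calc (1 / (T : ℝ)) * ∑ t ∈ Icc 1 T, f t (u t)
      ≤ (1 / (T : ℝ)) * ∑ t ∈ Icc 1 T, f t θ + E T := h3
    _ ≤ (1 / (T : ℝ)) * ∑ t ∈ Icc 1 T, f t θ + ε := add_le_add_right hlt.le _
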